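/- For any graphs G and H, 2γ(G □ H) ≥ γ(G)·γ(H). -/

import Mathlib

open Finset

/-- A `k`-rainbow dominating function: every vertex assigned `∅` sees all `k` colors
among its neighbors. -/
def SimpleGraph.IsRainbowDF {V : Type*} {k : ℕ} (G : SimpleGraph V)
    (f : V → Finset (Fin k)) : Prop :=
  ∀ v, f v = ∅ → ∀ c : Fin k, ∃ u, G.Adj v u ∧ c ∈ f u

/-- The `k`-rainbow domination number. -/
noncomputable def SimpleGraph.rainbowNum {V : Type*} [Fintype V] (G : SimpleGraph V)
    (k : ℕ) : ℕ :=
  sInf {w | ∃ f : V → Finset (Fin k), G.IsRainbowDF f ∧ w = ∑ v, (f v).card}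

/-- `S` is a dominating set of `G`. -/
def SimpleGraph.IsDomSet {V : Type*} (G : SimpleGraph V) (S : Set V) : Prop :=
  ∀ v, v ∉ S → ∃ u ∈ S, G.Adj v u

/-- The domination number. -/
noncomputable def SimpleGraph.domNum {V : Type*} [Fintype V] (G : SimpleGraph V) : ℕ :=
  sInf {n | ∃ S : Finset V, G.IsDomSet ↑S ∧ n = S.card}

/-- Clark–Suen: `2γ(G □ H) ≥ γ(G)·γ(H)`. -/
theorem domNum_mul_domNum_le_two_mul_domNum_boxProd {V W : Type*} [Fintype V] [Fintype W]
    (G : SimpleGraph V) (H : SimpleGraph W) :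
    G.domNum * H.domNum ≤ 2 * (G.boxProd H).domNum := by
  classical
  -- the defining sets are nonempty (univ is always dominating)
  have hGne : {n | ∃ S : Finset V, G.IsDomSet ↑S ∧ n = S.card}.Nonempty :=
    ⟨(univ : Finset V).card, univ,
      fun v hv => absurd (Finset.mem_coe.mpr (mem_univ v)) hv, rfl⟩
  have hBne : {n | ∃ S : Finset (V × W), (G.boxProd H).IsDomSet ↑S ∧ n = S.card}.Nonempty :=
    ⟨(univ : Finset (V × W)).card, univ,
      fun v hv => absurd (Finset.mem_coe.mpr (mem_univ v)) hv, rfl⟩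
  obtain ⟨S, hS, hkS⟩ : ∃ S : Finset V, G.IsDomSet ↑S ∧ G.domNum = S.card :=
    Nat.sInf_mem hGne
  obtain ⟨D, hD, hmD⟩ : ∃ D : Finset (V × W),
      (G.boxProd H).IsDomSet ↑D ∧ (G.boxProd H).domNum = D.card :=
    Nat.sInf_mem hBne
  have hHle : ∀ T : Finset W, H.IsDomSet ↑T → H.domNum ≤ T.card :=
    fun T hT => Nat.sInf_le ⟨T, hT, rfl⟩
  -- choose, for each g, a dominator d g ∈ S with g = d g or g ~ d g
  have hdom : ∀ g : V, ∃ u, u ∈ S ∧ (g = u ∨ G.Adj g u) := by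
    intro g
    by_cases hg : g ∈ S
    · exact ⟨g, hg, Or.inl rfl⟩
    · obtain ⟨u, hu, hadj⟩ := hS g (by simpa using hg)
      exact ⟨u, by simpa using hu, Or.inr hadj⟩
  choose d hd1 hd2 using hdom
  -- Hdom u h : the cell {g | d g = u} × {h} is entirely dominated within its G-layer
  set Hd : V → W → Prop :=
    fun u h => ∀ g, d g = u → ∃ g', ((g', h) ∈ D ∧ (g' = g ∨ G.Adj g g')) with hHd
  -- Step A: for every u, γ(H) ≤ |D ∩ (cell_u × W)| + #{h | Hd u h}
  have stepA : ∀ u : V, H.domNum ≤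
      (D.filter (fun p => d p.1 = u)).card + ((univ : Finset W).filter (Hd u)).card := by
    intro u
    set T : Finset W := (D.filter (fun p => d p.1 = u)).image Prod.snd ∪
      (univ : Finset W).filter (Hd u) with hT
    have hTdom : H.IsDomSet ↑T := by
      intro h hh
      have hh' : h ∉ T := by simpa using hh
      have hnH : ¬ Hd u h := by
        intro hcon
        exact hh' (mem_union_right _ (mem_filter.mpr ⟨mem_univ h, hcon⟩))
      simp only [hHd] at hnH
      push_neg at hnH
      obtain ⟨g, hgu, hng⟩ := hnH
      have hgD : (g, h) ∉ D := fun hc => (hng g hc).1 rfl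
      obtain ⟨p, hpD, hadj⟩ := hD (g, h) (by simpa using hgD)
      have hpD' : p ∈ D := by simpa using hpD
      rcases (SimpleGraph.boxProd_adj.mp hadj) with ⟨hGa, hWe⟩ | ⟨hHa, hVe⟩
      · have hp' : (p.1, h) ∈ D := by
          have : (p.1, h) = p := Prod.ext rfl hWe
          rw [this]; exact hpD'
        exact absurd hGa (hng p.1 hp').2
      · refine ⟨p.2, ?_, hHa⟩
        refine Finset.mem_coe.mpr (mem_union_left _ (mem_image.mpr ⟨p, ?_, rfl⟩))
        refine mem_filter.mpr ⟨hpD', ?_⟩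
        rw [← hVe]; exact hgu
    calc H.domNum ≤ T.card := hHle T hTdom
      _ ≤ ((D.filter (fun p => d p.1 = u)).image Prod.snd).card +
          ((univ : Finset W).filter (Hd u)).card := card_union_le _ _
      _ ≤ _ := by gcongr; exact card_image_le
  -- Step B: for every h, #{u ∈ S | Hd u h} ≤ |D ∩ (V × {h})|
  have stepB : ∀ h : W, (S.filter (fun u => Hd u h)).card ≤
      (D.filter (fun p => p.2 = h)).card := by
    intro h
    set T : Finset V := (D.filter (fun p => p.2 = h)).image Prod.fst ∪
      S.filter (fun u => ¬ Hd u h) with hT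
    have hTdom : G.IsDomSet ↑T := by
      intro g hg
      have hg' : g ∉ T := by simpa using hg
      by_cases hc : Hd (d g) h
      · obtain ⟨g', hg'D, hor⟩ := hc g rfl
        have hg'T : g' ∈ T := mem_union_left _
          (mem_image.mpr ⟨(g', h), mem_filter.mpr ⟨hg'D, rfl⟩, rfl⟩)
        rcases hor with rfl | hadj
        · exact absurd hg'T hg'
        · exact ⟨g', Finset.mem_coe.mpr hg'T, hadj⟩
      · have hdT : d g ∈ T := mem_union_right _ (mem_filter.mpr ⟨hd1 g, hc⟩)
        rcases hd2 g with heq | hadj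
        · rw [← heq] at hdT; exact absurd hdT hg'
        · exact ⟨d g, Finset.mem_coe.mpr hdT, hadj⟩
    have hGle : G.domNum ≤ T.card := Nat.sInf_le ⟨T, hTdom, rfl⟩
    have h1 : T.card ≤ (D.filter (fun p => p.2 = h)).card +
        (S.filter (fun u => ¬ Hd u h)).card :=
      le_trans (card_union_le _ _) (by gcongr; exact card_image_le)
    have h2 : (S.filter (fun u => Hd u h)).card +
        (S.filter (fun u => ¬ Hd u h)).card = S.card :=
      Finset.card_filter_add_card_filter_not _
    omega
  -- sum Step A over u ∈ S
  have sumA : S.card * H.domNum ≤ D.card +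
      ∑ u ∈ S, ((univ : Finset W).filter (Hd u)).card := by
    have hfib : D.card = ∑ u ∈ S, (D.filter (fun p => d p.1 = u)).card :=
      Finset.card_eq_sum_card_fiberwise (fun p _ => hd1 p.1)
    calc S.card * H.domNum = ∑ _u ∈ S, H.domNum := by
          rw [Finset.sum_const, smul_eq_mul]
      _ ≤ ∑ u ∈ S, ((D.filter (fun p => d p.1 = u)).card +
          ((univ : Finset W).filter (Hd u)).card) := Finset.sum_le_sum (fun u _ => stepA u)
      _ = D.card + ∑ u ∈ S, ((univ : Finset W).filter (Hd u)).card := by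
          rw [Finset.sum_add_distrib, ← hfib]
  -- double-count and sum Step B over h
  have swap : ∑ u ∈ S, ((univ : Finset W).filter (Hd u)).card =
      ∑ h : W, (S.filter (fun u => Hd u h)).card := by
    simp only [Finset.card_filter]
    exact Finset.sum_comm
  have sumB : ∑ h : W, (S.filter (fun u => Hd u h)).card ≤ D.card := by
    calc ∑ h : W, (S.filter (fun u => Hd u h)).card
        ≤ ∑ h : W, (D.filter (fun p => p.2 = h)).card := Finset.sum_le_sum (fun h _ => stepB h)
      _ = D.card := (Finset.card_eq_sum_card_fiberwise (fun p _ => mem_univ p.2)).symm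
  rw [hkS, hmD]
  omega
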